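/- Let k ≥ 3 be a natural number and let r be an integer coprime to k with 0 < r < k/2. Let L > 0 and let γ : ℝ → ℝ² be a C²-smooth, L-periodic map, injective on [0, L), whose image is the boundary of a strictly convex body, and which satisfies [γ(t), γ'(t)] = 1 for all t ∈ ℝ. Let A : ℝ² → ℝ² be a linear map of exact order k that maps the image of γ onto itself. Then there exists a natural number m coprime to k such that A^m(γ(t)) = γ(t + L·r/k) for all t ∈ ℝ; in particular B = A^m also has exact order k. -/

import Mathlib

def det2 (u v : ℝ × ℝ) : ℝ := u.1 * v.2 - u.2 * v.1

namespace SA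


abbrev LM := (ℝ × ℝ) →ₗ[ℝ] (ℝ × ℝ)

def tr (A : LM) : ℝ := (A (1,0)).1 + (A (0,1)).2
def dt (A : LM) : ℝ := (A (1,0)).1 * (A (0,1)).2 - (A (1,0)).2 * (A (0,1)).1

lemma apply_eq (A : LM) (u : ℝ × ℝ) :
    A u = (u.1 * (A (1,0)).1 + u.2 * (A (0,1)).1,
           u.1 * (A (1,0)).2 + u.2 * (A (0,1)).2) := by
  have : u = u.1 • ((1:ℝ),(0:ℝ)) + u.2 • ((0:ℝ),(1:ℝ)) := by
    apply Prod.ext <;> simp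
  rw [this, map_add, map_smul, map_smul]
  apply Prod.ext <;> simp [mul_comm]

lemma det2_map (A : LM) (u v : ℝ × ℝ) :
    det2 (A u) (A v) = dt A * det2 u v := by
  rw [apply_eq A u, apply_eq A v]
  simp only [det2, dt]
  ring

lemma dt_mul (A B : LM) : dt (A * B) = dt A * dt B := by
  have h1 : (A * B) ((1:ℝ),(0:ℝ)) = A (B (1,0)) := rfl
  have h2 : (A * B) ((0:ℝ),(1:ℝ)) = A (B (0,1)) := rfl
  simp only [dt, h1, h2, apply_eq A (B (1,0)), apply_eq A (B (0,1))]
  ring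

lemma dt_one : dt 1 = 1 := by simp [dt]

lemma dt_pow (A : LM) (n : ℕ) : dt (A ^ n) = dt A ^ n := by
  induction n with
  | zero => simpa using dt_one
  | succ n ih => rw [pow_succ, pow_succ, dt_mul, ih]

lemma cayley (A : LM) : A * A = tr A • A + (- dt A) • 1 := by
  refine LinearMap.ext fun u => ?_
  simp only [Module.End.mul_apply, LinearMap.add_apply, LinearMap.smul_apply,
    Module.End.one_apply]
  rw [apply_eq A (A u), apply_eq A u]
  apply Prod.ext <;>
    simp only [tr, dt, Prod.smul_mk, smul_eq_mul, Prod.fst_add, Prod.snd_add,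
      Prod.smul_fst, Prod.smul_snd] <;> ring

lemma dt_smul_one (e : ℝ) : dt (e • 1) = e ^ 2 := by
  simp [dt]; ring

lemma scalar_of_comb (A : LM) (a b : ℝ) (hane : a ≠ 0)
    (hab : (1 : LM) = a • A + b • 1) : dt A ≠ -1 := by
  intro hdt
  have h2 : a • A = (1 - b) • (1 : LM) := by
    calc a • A = (a • A + b • 1) - b • 1 := by abel
      _ = (1 : LM) - b • 1 := by rw [← hab]
      _ = (1 - b) • (1 : LM) := by module
  have hA : A = (a⁻¹ * (1 - b)) • 1 := by
    calc A = a⁻¹ • (a • A) := by rw [smul_smul, inv_mul_cancel₀ hane, one_smul]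
      _ = (a⁻¹ * (1 - b)) • 1 := by rw [h2, smul_smul]
  have : dt A = (a⁻¹ * (1-b))^2 := by rw [hA, dt_smul_one]
  rw [hdt] at this
  nlinarith [sq_nonneg (a⁻¹ * (1-b))]

lemma dt_ne_neg_one (A : LM) (k : ℕ) (hk : 3 ≤ k) (hAk : A ^ k = 1)
    (hAj : ∀ j : ℕ, 0 < j → j < k → A ^ j ≠ 1) : dt A ≠ -1 := by
  intro hdt
  have hcay : A * A = tr A • A + (1 : ℝ) • 1 := by
    rw [cayley, hdt]; norm_num
  have step : ∀ (a b : ℝ) (n : ℕ), A ^ (n+1) = a • A + b • 1 →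
      A ^ (n+2) = (tr A * a + b) • A + a • 1 := by
    intro a b n hab
    rw [pow_succ, hab, add_mul, smul_mul_assoc, smul_mul_assoc, hcay, one_mul,
      smul_add, smul_smul, smul_smul, mul_comm a (tr A), mul_one, add_smul]
    abel
  have hk1 : k - 1 + 1 = k := by omega
  rcases lt_trichotomy (tr A) 0 with hτ | hτ | hτ
  · have key : ∀ n : ℕ, ∃ a b : ℝ, A ^ (n+1) = a • A + b • 1 ∧
        0 < (-1:ℝ)^n * a ∧ 0 ≤ (-1:ℝ)^(n+1) * b := by
      intro n
      induction n with
      | zero => exact ⟨1, 0, by simp, by norm_num, by norm_num⟩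
      | succ n ih =>
        obtain ⟨a, b, hab, ha, hb⟩ := ih
        refine ⟨tr A * a + b, a, step a b n hab, ?_, ?_⟩
        · have h1 : 0 < (-tr A) * ((-1:ℝ)^n * a) := mul_pos (by linarith) ha
          have e1 : (-1:ℝ)^(n+1) * (tr A * a + b)
              = (-tr A) * ((-1:ℝ)^n * a) + (-1:ℝ)^(n+1) * b := by
            rw [pow_succ]; ring
          rw [e1]; linarith
        · have e2 : (-1:ℝ)^(n+1+1) * a = (-1:ℝ)^n * a := by
            rw [pow_succ, pow_succ]; ring
          rw [e2]; linarith
    obtain ⟨a, b, hab, ha, -⟩ := key (k - 1)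
    rw [hk1, hAk] at hab
    exact scalar_of_comb A a b (fun h => by simp [h] at ha) hab hdt
  · have : A ^ 2 = 1 := by rw [pow_two, hcay, hτ]; simp
    exact hAj 2 (by omega) (by omega) this
  · have key : ∀ n : ℕ, ∃ a b : ℝ, A ^ (n+1) = a • A + b • 1 ∧
        0 < a ∧ 0 ≤ b := by
      intro n
      induction n with
      | zero => exact ⟨1, 0, by simp, by norm_num, le_refl _⟩
      | succ n ih =>
        obtain ⟨a, b, hab, ha, hb⟩ := ih
        refine ⟨tr A * a + b, a, step a b n hab, ?_, le_of_lt ha⟩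
        have := mul_pos hτ ha; linarith
    obtain ⟨a, b, hab, ha, -⟩ := key (k - 1)
    rw [hk1, hAk] at hab
    exact scalar_of_comb A a b (ne_of_gt ha) hab hdt

lemma real_pow_eq_one {x : ℝ} {k : ℕ} (hk : k ≠ 0) (h : x ^ k = 1) :
    x = 1 ∨ x = -1 := by
  have h1 : |x| ^ k = 1 := by rw [← abs_pow, h, abs_one]
  have habs : |x| = 1 := by
    by_contra hne
    rcases lt_or_gt_of_ne hne with hlt | hgt
    · have := pow_lt_one₀ (abs_nonneg x) hlt hk
      rw [h1] at this; exact lt_irrefl _ this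
    · have := one_lt_pow₀ hgt hk
      rw [h1] at this; exact lt_irrefl _ this
  rcases (abs_eq (by norm_num : (0:ℝ) ≤ 1)).mp habs with h | h
  · exact Or.inl h
  · exact Or.inr h

lemma dt_eq_one (A : LM) (k : ℕ) (hk : 3 ≤ k) (hAk : A ^ k = 1)
    (hAj : ∀ j : ℕ, 0 < j → j < k → A ^ j ≠ 1) : dt A = 1 := by
  have hpow : dt A ^ k = 1 := by rw [← dt_pow, hAk, dt_one]
  rcases real_pow_eq_one (by omega) hpow with h | h
  · exact h
  · exact absurd h (dt_ne_neg_one A k hk hAk hAj)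





section Curve

variable {L : ℝ} {γ : ℝ → ℝ × ℝ}

lemma per_int (hper : ∀ t, γ (t + L) = γ t) (n : ℤ) (t : ℝ) :
    γ (t + n * L) = γ t :=
  (Function.Periodic.int_mul hper n) t

lemma normalize (hL : 0 < L) (hper : ∀ t, γ (t + L) = γ t) (b t : ℝ) :
    ∃ v, v ∈ Set.Ico b (b + L) ∧ (∃ n : ℤ, v = t + n * L) ∧ γ v = γ t := by
  set n : ℤ := ⌊(t - b) / L⌋ with hn
  refine ⟨t - n * L, ?_, ⟨-n, by push_cast; ring⟩,
    Function.Periodic.sub_int_mul_eq hper n⟩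
  have h1 : (n : ℝ) ≤ (t - b) / L := Int.floor_le _
  have h2 : (t - b) / L < n + 1 := Int.lt_floor_add_one _
  have h1' := mul_le_mul_of_nonneg_right h1 (le_of_lt hL)
  rw [div_mul_cancel₀ _ (ne_of_gt hL)] at h1'
  have h2' := mul_lt_mul_of_pos_right h2 hL
  rw [div_mul_cancel₀ _ (ne_of_gt hL)] at h2'
  constructor
  · linarith
  · nlinarith

lemma inj_mod (hL : 0 < L) (hper : ∀ t, γ (t + L) = γ t)
    (hinj : Set.InjOn γ (Set.Ico 0 L)) {a b : ℝ} (h : γ a = γ b) :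
    ∃ n : ℤ, a = b + n * L := by
  obtain ⟨a', ha'mem, ⟨n₁, hn₁⟩, ha'⟩ := normalize hL hper 0 a
  obtain ⟨b', hb'mem, ⟨n₂, hn₂⟩, hb'⟩ := normalize hL hper 0 b
  rw [zero_add] at ha'mem hb'mem
  have : a' = b' := hinj ha'mem hb'mem (by rw [ha', hb', h])
  refine ⟨n₂ - n₁, ?_⟩
  have := hn₁ ▸ hn₂ ▸ this
  push_cast
  linarith

/-- Cramer's rule for `det2`. -/
lemma cramer {v w : ℝ × ℝ} (h : det2 v w = 1) (u : ℝ × ℝ) :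
    u = det2 u w • v + det2 v u • w := by
  simp only [det2] at h ⊢
  apply Prod.ext
  · simp only [Prod.fst_add, Prod.smul_fst, smul_eq_mul]
    linear_combination -u.1 * h
  · simp only [Prod.snd_add, Prod.smul_snd, smul_eq_mul]
    linear_combination -u.2 * h

lemma fix_eq_one (hγ : ContDiff ℝ 2 γ)
    (hdet : ∀ t : ℝ, det2 (γ t) (deriv γ t) = 1)
    (B : LM) (hfix : ∀ t, B (γ t) = γ t) : B = 1 := by
  have hdiff : Differentiable ℝ γ := hγ.differentiable (by norm_num)
  have h1 : HasDerivAt γ (deriv γ 0) 0 := (hdiff 0).hasDerivAt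
  have h2 : HasDerivAt (fun t => B (γ t)) (B (deriv γ 0)) 0 := by
    exact (B.toContinuousLinearMap.hasFDerivAt.comp_hasDerivAt 0 h1)
  have h3 : (fun t => B (γ t)) = γ := funext hfix
  rw [h3] at h2
  have hBd : B (deriv γ 0) = deriv γ 0 := h2.unique h1
  have hB0 : B (γ 0) = γ 0 := hfix 0
  refine LinearMap.ext fun u => ?_
  have hu := cramer (hdet 0) u
  rw [Module.End.one_apply]
  calc B u = B (det2 u (deriv γ 0) • γ 0 + det2 (γ 0) u • deriv γ 0) := by rw [← hu]
    _ = det2 u (deriv γ 0) • B (γ 0) + det2 (γ 0) u • B (deriv γ 0) := by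
        rw [map_add, map_smul, map_smul]
    _ = u := by rw [hBd, hB0, ← hu]

/-- Local parameter continuity. -/
lemma param_cont (hL : 0 < L) (hγ : ContDiff ℝ 2 γ)
    (hper : ∀ t, γ (t + L) = γ t) (hinj : Set.InjOn γ (Set.Ico 0 L))
    (u₀ : ℝ) {ε : ℝ} (hε : 0 < ε) (hεL : ε ≤ L / 2) :
    ∃ δ > 0, ∀ p ∈ Set.range γ, dist p (γ u₀) < δ →
      ∃ u, |u - u₀| ≤ ε ∧ γ u = p := by
  set T : Set ℝ := Set.Icc (u₀ - L/2) (u₀ + L/2) ∩ {u | ε ≤ |u - u₀|} with hT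
  have hTcomp : IsCompact T :=
    isCompact_Icc.inter_right (isClosed_le continuous_const
      ((continuous_id.sub continuous_const).abs))
  have hTimg : IsCompact (γ '' T) := hTcomp.image hγ.continuous
  have hnotmem : γ u₀ ∉ γ '' T := by
    rintro ⟨u, ⟨humem, huε⟩, hu⟩
    obtain ⟨n, hn⟩ := inj_mod hL hper hinj hu
    rcases humem with ⟨hl, hr⟩
    have huε' : ε ≤ |u - u₀| := huε
    have hd : u - u₀ = (n : ℝ) * L := by rw [hn]; ring
    have habs : |u - u₀| = |(n : ℝ)| * L := by rw [hd, abs_mul, abs_of_pos hL]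
    have hle : |u - u₀| ≤ L / 2 := abs_le.mpr ⟨by linarith, by linarith⟩
    have hn0 : n = 0 := by
      by_contra h
      have h1 : (1 : ℤ) ≤ |n| := Int.one_le_abs h
      have h1' : (1 : ℝ) ≤ |(n : ℝ)| := by exact_mod_cast h1
      have h2 := mul_le_mul_of_nonneg_right h1' hL.le
      rw [one_mul] at h2
      linarith
    rw [hn0] at habs
    simp at habs
    have hz : |u - u₀| = 0 := by rw [habs, abs_zero]
    linarith
  have hclosed : IsClosed (γ '' T) := hTimg.isClosed
  have : (γ '' T)ᶜ ∈ nhds (γ u₀) := hclosed.isOpen_compl.mem_nhds hnotmem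
  obtain ⟨δ, hδpos, hδ⟩ := Metric.mem_nhds_iff.mp this
  refine ⟨δ, hδpos, ?_⟩
  rintro p ⟨t, rfl⟩ hdist
  obtain ⟨v, hvmem, _, hv⟩ := normalize hL hper (u₀ - L/2) t
  have hvT : v ∉ T := by
    intro hvT
    exact hδ (Metric.mem_ball.mpr (by rwa [hv] : dist (γ v) (γ u₀) < δ)) ⟨v, hvT, rfl⟩
  have hvIcc : v ∈ Set.Icc (u₀ - L/2) (u₀ + L/2) := by
    rcases hvmem with ⟨h1, h2⟩
    constructor
    · exact h1
    · have : u₀ - L/2 + L = u₀ + L/2 := by ring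
      linarith [this ▸ h2]
  have : ¬ (ε ≤ |v - u₀|) := fun h => hvT ⟨hvIcc, h⟩
  exact ⟨v, by linarith [lt_of_not_ge this], hv⟩

end Curve

section Shift

variable {L : ℝ} {γ : ℝ → ℝ × ℝ}

lemma det2_smul_right (u w : ℝ × ℝ) (a : ℝ) : det2 u (a • w) = a * det2 u w := by
  simp only [det2, Prod.smul_fst, Prod.smul_snd, smul_eq_mul]; ring

lemma local_shift (hL : 0 < L) (hγ : ContDiff ℝ 2 γ)
    (hper : ∀ t, γ (t + L) = γ t) (hinj : Set.InjOn γ (Set.Ico 0 L))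
    (hdet : ∀ t : ℝ, det2 (γ t) (deriv γ t) = 1)
    (A : LM) (hdtA : dt A = 1)
    (hmem : ∀ p, p ∈ Set.range γ → A p ∈ Set.range γ)
    {t₀ c : ℝ} (h₀ : A (γ t₀) = γ (t₀ + c)) :
    ∀ᶠ s in nhds t₀, A (γ s) = γ (s + c) := by
  have hdiff : Differentiable ℝ γ := hγ.differentiable (by norm_num)
  set u₀ : ℝ := t₀ + c with hu₀
  set v : ℝ × ℝ := γ u₀ with hv
  set d : ℝ × ℝ := deriv γ u₀ with hd
  have hdv : det2 v d = 1 := hdet u₀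
  -- the linear equivalence p ↦ p.1 • d + p.2 • v
  let M : LM :=
    { toFun := fun p => p.1 • d + p.2 • v
      map_add' := fun p q => by
        simp only [Prod.fst_add, Prod.snd_add, add_smul]; abel
      map_smul' := fun a p => by
        simp only [Prod.smul_fst, Prod.smul_snd, smul_eq_mul, RingHom.id_apply,
          smul_add, smul_smul] }
  let N : LM :=
    { toFun := fun p => (-det2 p v, -det2 d p)
      map_add' := fun p q => by
        simp only [det2, Prod.fst_add, Prod.snd_add, Prod.mk_add_mk]
        apply Prod.ext <;> simp <;> ring
      map_smul' := fun a p => by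
        simp only [det2, Prod.smul_fst, Prod.smul_snd, smul_eq_mul,
          RingHom.id_apply, Prod.smul_mk]
        apply Prod.ext <;> simp <;> ring }
  have hMN : M ∘ₗ N = LinearMap.id := by
    refine LinearMap.ext fun p => ?_
    simp only [LinearMap.coe_comp, Function.comp_apply, LinearMap.coe_mk,
      AddHom.coe_mk, LinearMap.id_apply, M, N]
    simp only [det2] at hdv ⊢
    apply Prod.ext
    · simp only [Prod.fst_add, Prod.smul_fst, smul_eq_mul]
      linear_combination p.1 * hdv
    · simp only [Prod.snd_add, Prod.smul_snd, smul_eq_mul]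
      linear_combination p.2 * hdv
  have hNM : N ∘ₗ M = LinearMap.id := by
    refine LinearMap.ext fun q => ?_
    simp only [LinearMap.coe_comp, Function.comp_apply, LinearMap.coe_mk,
      AddHom.coe_mk, LinearMap.id_apply, M, N]
    simp only [det2] at hdv ⊢
    apply Prod.ext
    · simp only [Prod.fst_add, Prod.snd_add, Prod.smul_fst, Prod.smul_snd, smul_eq_mul]
      linear_combination q.1 * hdv
    · simp only [Prod.fst_add, Prod.snd_add, Prod.smul_fst, Prod.smul_snd, smul_eq_mul]
      linear_combination q.2 * hdv
  let le : (ℝ × ℝ) ≃ₗ[ℝ] (ℝ × ℝ) := LinearEquiv.ofLinear M N hMN hNM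
  let Ψ : (ℝ × ℝ) ≃L[ℝ] (ℝ × ℝ) := le.toContinuousLinearEquiv
  have hΨapp : ∀ p : ℝ × ℝ, (Ψ : (ℝ × ℝ) →L[ℝ] (ℝ × ℝ)) p = p.1 • d + p.2 • v :=
    fun p => rfl
  -- the map Φ
  set Φ : ℝ × ℝ → ℝ × ℝ := fun p => γ p.1 + p.2 • v with hΦ
  have hΦc : ContDiff ℝ 1 Φ :=
    ((hγ.of_le (by norm_num)).comp contDiff_fst).add (contDiff_snd.smul contDiff_const)
  have hΦ0 : Φ (u₀, 0) = γ u₀ := by simp [hΦ]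
  have hdu : HasDerivAt γ d u₀ := (hdiff u₀).hasDerivAt
  have hfd1 : HasFDerivAt (fun p : ℝ × ℝ => γ p.1)
      ((ContinuousLinearMap.smulRight (1 : ℝ →L[ℝ] ℝ) d).comp
        (ContinuousLinearMap.fst ℝ ℝ ℝ)) (u₀, 0) :=
    hdu.hasFDerivAt.comp (u₀, (0:ℝ)) hasFDerivAt_fst
  have hfd2 : HasFDerivAt (fun p : ℝ × ℝ => p.2 • v)
      ((ContinuousLinearMap.snd ℝ ℝ ℝ).smulRight v) (u₀, 0) :=
    ((ContinuousLinearMap.snd ℝ ℝ ℝ).smulRight v).hasFDerivAt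
  have hfdΦ : HasFDerivAt Φ (Ψ : (ℝ × ℝ) →L[ℝ] (ℝ × ℝ)) (u₀, 0) := by
    have h := hfd1.add hfd2
    have heq : ((ContinuousLinearMap.smulRight (1 : ℝ →L[ℝ] ℝ) d).comp
        (ContinuousLinearMap.fst ℝ ℝ ℝ) +
        (ContinuousLinearMap.snd ℝ ℝ ℝ).smulRight v)
        = (Ψ : (ℝ × ℝ) →L[ℝ] (ℝ × ℝ)) := by
      refine ContinuousLinearMap.ext fun p => ?_
      rw [hΨapp p]
      simp
    rw [← heq]
    exact h
  have hΦca : ContDiffAt ℝ 1 Φ (u₀, 0) := hΦc.contDiffAt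
  have hstrict : HasStrictFDerivAt Φ (Ψ : (ℝ × ℝ) →L[ℝ] (ℝ × ℝ)) (u₀, 0) :=
    hΦca.hasStrictFDerivAt' hfdΦ one_ne_zero
  set g : ℝ × ℝ → ℝ × ℝ := hstrict.localInverse Φ Ψ (u₀, 0) with hg
  -- left inverse on parameters
  have hlinv : ∀ᶠ p in nhds ((u₀ : ℝ), (0:ℝ)), g (Φ p) = p :=
    hstrict.eventually_left_inverse
  have htend : Filter.Tendsto (fun u : ℝ => (u, (0:ℝ))) (nhds u₀) (nhds (u₀, (0:ℝ))) :=
    (continuous_id.prodMk continuous_const).continuousAt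
  have hlinv' : ∀ᶠ u in nhds u₀, g (γ u) = (u, 0) := by
    filter_upwards [htend.eventually hlinv] with u hu
    have : Φ (u, 0) = γ u := by simp [hΦ]
    rwa [this] at hu
  obtain ⟨ε₁, hε₁pos, hε₁⟩ := Metric.eventually_nhds_iff.mp hlinv'
  -- differentiability of g near γ u₀
  have hgC : ContDiffAt ℝ 1 g (γ u₀) := by
    have := hΦca.to_localInverse (f' := Ψ) hfdΦ one_ne_zero
    rw [hΦ0] at this
    exact this
  obtain ⟨V, hVmem, hVdiff⟩ := hgC.contDiffOn le_rfl (by simp)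
  have hVint : γ u₀ ∈ interior V := mem_interior_iff_mem_nhds.mpr hVmem
  have hgdiff : ∀ p ∈ interior V, DifferentiableAt ℝ g p := fun p hp =>
    (hVdiff.differentiableOn one_ne_zero).differentiableAt
      (Filter.mem_of_superset (isOpen_interior.mem_nhds hp) interior_subset)
  -- parameter continuity
  set ε : ℝ := min (ε₁ / 2) (L / 2) with hε
  have hεpos : 0 < ε := lt_min (by linarith) (by linarith)
  obtain ⟨δ, hδpos, hδ⟩ := param_cont hL hγ hper hinj u₀ hεpos (min_le_right _ _)
  -- the eventual neighborhood
  have hAcont : Continuous fun s => A (γ s) :=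
    (LinearMap.continuous_of_finiteDimensional A).comp hγ.continuous
  have hev1 : ∀ᶠ s in nhds t₀, dist (A (γ s)) (γ u₀) < δ := by
    have : Filter.Tendsto (fun s => A (γ s)) (nhds t₀) (nhds (γ u₀)) := by
      rw [← hv, ← h₀]; exact hAcont.continuousAt
    exact this (Metric.ball_mem_nhds _ hδpos)
  have hev2 : ∀ᶠ s in nhds t₀, A (γ s) ∈ interior V := by
    have : Filter.Tendsto (fun s => A (γ s)) (nhds t₀) (nhds (γ u₀)) := by
      rw [← hv, ← h₀]; exact hAcont.continuousAt
    exact this (isOpen_interior.mem_nhds hVint)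
  set w : ℝ × ℝ → ℝ := fun p => (g p).1 with hw
  set ψ : ℝ → ℝ := fun s => w (A (γ s)) with hψ
  have hkey : ∀ᶠ s in nhds t₀, γ (ψ s) = A (γ s) ∧ DifferentiableAt ℝ ψ s := by
    filter_upwards [hev1, hev2] with s h1 h2
    constructor
    · obtain ⟨u, huε, hu⟩ := hδ (A (γ s)) (hmem _ ⟨s, rfl⟩) h1
      have h3 : g (γ u) = (u, 0) := hε₁ (y := u) (by
          rw [Real.dist_eq]
          calc |u - u₀| ≤ ε := huε
            _ < ε₁ := lt_of_le_of_lt (min_le_left _ _) (by linarith))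
      have h4 : w (γ u) = u := by show (g (γ u)).1 = u; rw [h3]
      show γ (w (A (γ s))) = A (γ s)
      rw [← hu, h4]
    · have hgd : DifferentiableAt ℝ g (A (γ s)) := hgdiff _ h2
      have hAγd : DifferentiableAt ℝ (fun x => A (γ x)) s :=
        A.toContinuousLinearMap.differentiableAt.comp s (hdiff s)
      exact ((hgd.comp s hAγd).fst : DifferentiableAt ℝ (fun x => (g (A (γ x))).1) s)
  obtain ⟨η, hηpos, hη⟩ := Metric.eventually_nhds_iff.mp hkey
  have hderiv1 : ∀ s, dist s t₀ < η → deriv ψ s = 1 := by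
    intro s hs
    have h1 : γ (ψ s) = A (γ s) := (hη hs).1
    have h2 : DifferentiableAt ℝ ψ s := (hη hs).2
    have hψs : HasDerivAt ψ (deriv ψ s) s := h2.hasDerivAt
    have hγψ : HasDerivAt (fun x => γ (ψ x)) (deriv ψ s • deriv γ (ψ s)) s :=
      (hdiff (ψ s)).hasDerivAt.scomp s hψs
    have hEq : (fun x => A (γ x)) =ᶠ[nhds s] fun x => γ (ψ x) := by
      have hb : Metric.ball t₀ η ∈ nhds s :=
        Metric.isOpen_ball.mem_nhds (by rwa [Metric.mem_ball])
      filter_upwards [hb] with x hx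
      exact ((hη (Metric.mem_ball.mp hx)).1).symm
    have hAγ2 : HasDerivAt (fun x => A (γ x)) (deriv ψ s • deriv γ (ψ s)) s :=
      hγψ.congr_of_eventuallyEq hEq
    have hAγs : HasDerivAt (fun x => A (γ x)) (A (deriv γ s)) s :=
      A.toContinuousLinearMap.hasFDerivAt.comp_hasDerivAt s (hdiff s).hasDerivAt
    have huniq : A (deriv γ s) = deriv ψ s • deriv γ (ψ s) := hAγs.unique hAγ2
    have e1 : det2 (A (γ s)) (A (deriv γ s)) = 1 := by
      rw [det2_map, hdtA, hdet s, one_mul]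
    rw [huniq, ← h1, det2_smul_right, hdet (ψ s), mul_one] at e1
    exact e1
  have hψt₀ : ψ t₀ = t₀ + c := by
    show (g (A (γ t₀))).1 = t₀ + c
    rw [h₀, hv]
    have h5 : g (γ u₀) = (u₀, 0) := hε₁ (y := u₀) (by simpa using hε₁pos)
    rw [h5]
  -- constancy of ψ s - s on the ball
  have hconst : ∀ s, dist s t₀ < η → ψ s = s + c := by
    intro s hs
    set B := Metric.ball t₀ η with hB
    set f : ℝ → ℝ := fun x => ψ x - x with hf
    have hfd : ∀ x ∈ B, HasDerivAt f 0 x := by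
      intro x hx
      have h2 : DifferentiableAt ℝ ψ x := (hη (Metric.mem_ball.mp hx)).2
      have := h2.hasDerivAt.sub (hasDerivAt_id x)
      rwa [hderiv1 x (Metric.mem_ball.mp hx), sub_self] at this
    have hdiffOn : DifferentiableOn ℝ f B := fun x hx =>
      ((hfd x hx).differentiableAt).differentiableWithinAt
    have hzero : ∀ x ∈ B, fderivWithin ℝ f B x = 0 := by
      intro x hx
      rw [fderivWithin_of_isOpen Metric.isOpen_ball hx]
      have : fderiv ℝ f x = ContinuousLinearMap.smulRight (1 : ℝ →L[ℝ] ℝ) (0:ℝ) :=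
        (hfd x hx).hasFDerivAt.fderiv
      rw [this]
      ext z
      simp
    have hsB : s ∈ B := Metric.mem_ball.mpr hs
    have ht₀B : t₀ ∈ B := Metric.mem_ball_self hηpos
    have := (convex_ball t₀ η).is_const_of_fderivWithin_eq_zero hdiffOn hzero hsB ht₀B
    have h6 : ψ s - s = ψ t₀ - t₀ := this
    rw [hψt₀] at h6
    linarith
  have hball : Metric.ball t₀ η ∈ nhds t₀ := Metric.ball_mem_nhds _ hηpos
  filter_upwards [hball] with s hs
  have h1 : γ (ψ s) = A (γ s) := (hη (Metric.mem_ball.mp hs)).1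
  rw [← h1, hconst s (Metric.mem_ball.mp hs)]

lemma exists_shift (hL : 0 < L) (hγ : ContDiff ℝ 2 γ)
    (hper : ∀ t, γ (t + L) = γ t) (hinj : Set.InjOn γ (Set.Ico 0 L))
    (hdet : ∀ t : ℝ, det2 (γ t) (deriv γ t) = 1)
    (A : LM) (hdtA : dt A = 1)
    (hmem : ∀ p, p ∈ Set.range γ → A p ∈ Set.range γ) :
    ∃ c, ∀ t, A (γ t) = γ (t + c) := by
  obtain ⟨c, hc⟩ : ∃ c, A (γ 0) = γ (0 + c) := by
    obtain ⟨c, hc⟩ := hmem (γ 0) ⟨0, rfl⟩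
    exact ⟨c, by rw [zero_add, hc]⟩
  set S := {t : ℝ | A (γ t) = γ (t + c)} with hS
  have hopen : IsOpen S := by
    rw [isOpen_iff_mem_nhds]
    intro t ht
    exact local_shift hL hγ hper hinj hdet A hdtA hmem ht
  have hclosed : IsClosed S := by
    apply isClosed_eq
    · exact (LinearMap.continuous_of_finiteDimensional A).comp hγ.continuous
    · exact hγ.continuous.comp (continuous_id.add continuous_const)
  have huniv : S = Set.univ := IsClopen.eq_univ ⟨hclosed, hopen⟩ ⟨0, hc⟩
  refine ⟨c, fun t => ?_⟩
  have : t ∈ S := huniv.symm ▸ Set.mem_univ t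
  exact this

end Shift

end SA

theorem stmt_6 (k : ℕ) (hk : 3 ≤ k) (r : ℤ) (hcop : IsCoprime r (k : ℤ))
    (hr0 : 0 < r) (hr2 : 2 * r < (k : ℤ))
    (L : ℝ) (hL : 0 < L)
    (γ : ℝ → ℝ × ℝ) (hγ : ContDiff ℝ 2 γ)
    (hper : ∀ t : ℝ, γ (t + L) = γ t)
    (hinj : Set.InjOn γ (Set.Ico 0 L))
    (K : Set (ℝ × ℝ)) (hKcomp : IsCompact K) (hKconv : Convex ℝ K)
    (hKint : (interior K).Nonempty) (hKstrict : StrictConvex ℝ K)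
    (hbd : Set.range γ = frontier K)
    (hdet : ∀ t : ℝ, det2 (γ t) (deriv γ t) = 1)
    (A : (ℝ × ℝ) →ₗ[ℝ] (ℝ × ℝ))
    (hAk : A ^ k = 1) (hAj : ∀ j : ℕ, 0 < j → j < k → A ^ j ≠ 1)
    (hAγ : A '' Set.range γ = Set.range γ) :
    ∃ m : ℕ, Nat.Coprime m k ∧
      (∀ t : ℝ, (A ^ m) (γ t) = γ (t + L * r / k)) ∧
      (A ^ m) ^ k = 1 ∧ (∀ j : ℕ, 0 < j → j < k → (A ^ m) ^ j ≠ 1) := by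
  have hk0 : k ≠ 0 := by omega
  have hkne : (k : ℝ) ≠ 0 := by
    simpa using (Nat.cast_ne_zero (R := ℝ)).mpr hk0
  have hLne : L ≠ 0 := ne_of_gt hL
  -- determinant is one
  have hdtA : SA.dt A = 1 := SA.dt_eq_one A k hk hAk hAj
  -- A maps the curve into itself
  have hmem : ∀ p, p ∈ Set.range γ → A p ∈ Set.range γ := fun p hp => by
    rw [← hAγ]; exact Set.mem_image_of_mem A hp
  -- the shift
  obtain ⟨c, hc⟩ := SA.exists_shift hL hγ hper hinj hdet A hdtA hmem
  -- powers of A shift by multiples of c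
  have hpow : ∀ (n : ℕ) (t : ℝ), (A ^ n) (γ t) = γ (t + n * c) := by
    intro n
    induction n with
    | zero => intro t; simp
    | succ n ih =>
      intro t
      rw [pow_succ, Module.End.mul_apply, hc t, ih (t + c)]
      congr 1
      push_cast
      ring
  -- k * c is a multiple of L
  obtain ⟨s, hs⟩ : ∃ s : ℤ, (k : ℝ) * c = s * L := by
    have h1 := hpow k 0
    rw [hAk, Module.End.one_apply] at h1
    obtain ⟨n, hn⟩ := SA.inj_mod hL hper hinj h1.symm
    exact ⟨n, by linarith⟩
  -- if j * c is a multiple of L then A ^ j = 1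
  have hfix : ∀ j : ℕ, (∃ n : ℤ, (j : ℝ) * c = n * L) → A ^ j = 1 := by
    rintro j ⟨n, hn⟩
    apply SA.fix_eq_one hγ hdet
    intro t
    rw [hpow j t, hn]
    exact SA.per_int hper n t
  -- s is coprime to k
  have hsk : Int.gcd s (k : ℤ) = 1 := by
    by_contra hne
    set d : ℕ := Int.gcd s (k : ℤ) with hd
    have hdpos : 0 < d := Int.gcd_pos_of_ne_zero_right s (by exact_mod_cast hk0)
    have hd2 : 2 ≤ d := by omega
    have hdk : (d : ℤ) ∣ (k : ℤ) := Int.gcd_dvd_right s (k : ℤ)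
    have hds : (d : ℤ) ∣ s := Int.gcd_dvd_left s (k : ℤ)
    obtain ⟨k', hk'⟩ : d ∣ k := Int.ofNat_dvd.mp hdk
    obtain ⟨s', hs'⟩ := hds
    have hk'pos : 0 < k' := by
      rcases Nat.eq_zero_or_pos k' with h | h
      · exfalso; rw [h, mul_zero] at hk'; exact hk0 hk'
      · exact h
    have hk'lt : k' < k := by
      calc k' < 2 * k' := by omega
        _ ≤ d * k' := Nat.mul_le_mul_right k' hd2
        _ = k := hk'.symm
    have hone : A ^ k' = 1 := by
      apply hfix k'
      refine ⟨s', ?_⟩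
      have hdR : (d : ℝ) ≠ 0 := by
        simpa using (Nat.cast_ne_zero (R := ℝ)).mpr (by omega : d ≠ 0)
      apply mul_left_cancel₀ hdR
      have e1 : (k : ℝ) = (d : ℝ) * (k' : ℝ) := by exact_mod_cast congrArg (Nat.cast : ℕ → ℝ) hk'
      have e2 : (s : ℝ) = (d : ℝ) * (s' : ℝ) := by exact_mod_cast congrArg (Int.cast : ℤ → ℝ) hs'
      calc (d:ℝ) * ((k':ℝ) * c) = (k:ℝ) * c := by rw [e1]; ring
        _ = (s:ℝ) * L := hs
        _ = (d:ℝ) * ((s':ℝ) * L) := by rw [e2]; ring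
    exact hAj k' hk'pos hk'lt hone
  have hscop : IsCoprime s (k : ℤ) := Int.isCoprime_iff_gcd_eq_one.mpr hsk
  haveI : NeZero k := ⟨hk0⟩
  -- invert s mod k and define m
  obtain ⟨x, y, hxy⟩ := hscop
  have hxs : (x : ZMod k) * (s : ZMod k) = 1 := by
    have h1 := congrArg (fun z : ℤ => (z : ZMod k)) hxy
    push_cast at h1
    rw [ZMod.natCast_self, mul_zero, add_zero] at h1
    exact h1
  have hcop' := hcop
  obtain ⟨x', y', hxy'⟩ := hcop'
  have hxr : (x' : ZMod k) * (r : ZMod k) = 1 := by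
    have h1 := congrArg (fun z : ℤ => (z : ZMod k)) hxy'
    push_cast at h1
    rw [ZMod.natCast_self, mul_zero, add_zero] at h1
    exact h1
  set mz : ZMod k := (r : ZMod k) * (x : ZMod k) with hmz
  set m : ℕ := mz.val with hm
  have hmcast : (m : ZMod k) = mz := by
    rw [hm, ZMod.natCast_val, ZMod.cast_id]
  have hunit : IsUnit (mz : ZMod k) := by
    have h1 : IsUnit ((r : ZMod k)) :=
      IsUnit.of_mul_eq_one _ (by rw [mul_comm]; exact hxr)
    have h2 : IsUnit ((x : ZMod k)) := IsUnit.of_mul_eq_one _ hxs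
    exact h1.mul h2
  have hmcop : Nat.Coprime m k := by
    have := (ZMod.isUnit_iff_coprime m k).mp (by rw [hmcast]; exact hunit)
    exact this
  -- m * s ≡ r (mod k)
  obtain ⟨n, hn⟩ : ∃ n : ℤ, (m : ℤ) * s - r = (k : ℤ) * n := by
    have h1 : (((m : ℤ) * s - r : ℤ) : ZMod k) = 0 := by
      push_cast
      rw [hmcast, hmz, mul_assoc, hxs, mul_one, sub_self]
    exact (ZMod.intCast_zmod_eq_zero_iff_dvd _ k).mp h1
  have hmsR : (m : ℝ) * (s : ℝ) = (r : ℝ) + (k : ℝ) * (n : ℝ) := by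
    have := congrArg (fun z : ℤ => (z : ℝ)) hn
    push_cast at this
    linarith
  -- the value of m * c
  have hmc : (m : ℝ) * c = L * (r : ℝ) / (k : ℝ) + (n : ℝ) * L := by
    apply mul_left_cancel₀ hkne
    calc (k:ℝ) * ((m:ℝ) * c) = (m:ℝ) * ((k:ℝ) * c) := by ring
      _ = (m:ℝ) * ((s:ℝ) * L) := by rw [hs]
      _ = ((m:ℝ) * (s:ℝ)) * L := by ring
      _ = ((r:ℝ) + (k:ℝ) * (n:ℝ)) * L := by rw [hmsR]
      _ = (k:ℝ) * (L * (r : ℝ) / (k : ℝ) + (n : ℝ) * L) := by field_simp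
  refine ⟨m, hmcop, ?_, ?_, ?_⟩
  · intro t
    rw [hpow m t]
    have : t + (m:ℝ) * c = (t + L * (r:ℝ) / (k:ℝ)) + (n:ℝ) * L := by
      rw [hmc]; ring
    rw [this]
    exact SA.per_int hper n _
  · rw [← pow_mul, mul_comm, pow_mul, hAk, one_pow]
  · intro j hj0 hjk hone
    rw [← pow_mul] at hone
    have h1 := hpow (m * j) 0
    rw [hone, Module.End.one_apply] at h1
    obtain ⟨n', hn'⟩ := SA.inj_mod hL hper hinj h1.symm
    have h2 : ((m * j : ℕ) : ℝ) * c = (n' : ℝ) * L := by linarith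
    -- multiply by k
    have h3 : ((m : ℝ) * (j : ℝ) * (s:ℝ)) * L = ((n' : ℝ) * (k:ℝ)) * L := by
      calc ((m : ℝ) * (j : ℝ) * (s:ℝ)) * L = (m:ℝ) * (j:ℝ) * ((s:ℝ) * L) := by ring
        _ = (m:ℝ) * (j:ℝ) * ((k:ℝ) * c) := by rw [hs]
        _ = (k:ℝ) * (((m * j : ℕ) : ℝ) * c) := by push_cast; ring
        _ = (k:ℝ) * ((n' : ℝ) * L) := by rw [h2]
        _ = ((n' : ℝ) * (k:ℝ)) * L := by ring
    have h4 : (m : ℝ) * (j : ℝ) * (s:ℝ) = (n' : ℝ) * (k:ℝ) :=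
      mul_right_cancel₀ hLne h3
    have h5 : (m : ℤ) * (j : ℤ) * s = n' * (k : ℤ) := by exact_mod_cast h4
    have h6 : (k : ℤ) ∣ (j : ℤ) * r := by
      have e1 : (j:ℤ) * r = (m:ℤ) * (j:ℤ) * s - (j:ℤ) * ((k:ℤ) * n) := by
        have : (m:ℤ) * s = r + (k:ℤ) * n := by linarith
        calc (j:ℤ) * r = (j:ℤ) * ((m:ℤ) * s - (k:ℤ) * n) := by rw [this]; ring
          _ = (m:ℤ) * (j:ℤ) * s - (j:ℤ) * ((k:ℤ) * n) := by ring
      rw [e1, h5]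
      exact dvd_sub ⟨n', by ring⟩ ⟨(j:ℤ) * n, by ring⟩
    have h7 : (k : ℤ) ∣ (j : ℤ) := (hcop.symm).dvd_of_dvd_mul_right h6
    have h8 : k ∣ j := Int.ofNat_dvd.mp h7
    have := Nat.le_of_dvd hj0 h8
    omega
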